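/- Optional Sampling Theorem on time scales (martingale case): Let 𝕋 be a bounded time scale with minimum 0 and maximum b ∈ 𝕋, and let X = (X_t)_{t∈𝕋} be a right-continuous martingale with respect to a filtration (ℱ_t)_{t∈𝕋} on a probability space (Ω, 𝒜, P) (so X_b serves as a last element). If S₁ and S₂ are stopping times relative to (ℱ_t) with S₁ ≤ S₂ pointwise, then X_{S₁} and X_{S₂} are integrable and E[X_{S₂} | ℱ_{S₁}] = X_{S₁} P-almost surely. -/

import Mathlib

open MeasureTheory Filter Topology

section TSOS
variable {T : Set ℝ} {b : ℝ}

theorem tsos_orderTopology (hcl : IsClosed T) (hsub : T ⊆ Set.Icc 0 b) :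
    OrderTopology ↥T := by
  constructor
  refine le_antisymm (le_generateFrom ?_) ?_
  · rintro s ⟨a, rfl | rfl⟩
    · have : (Set.Ioi a : Set ↥T) = Subtype.val ⁻¹' Set.Ioi (a : ℝ) := by
        ext x; simp [Subtype.coe_lt_coe]
      rw [this]
      exact isOpen_Ioi.preimage continuous_subtype_val
    · have : (Set.Iio a : Set ↥T) = Subtype.val ⁻¹' Set.Iio (a : ℝ) := by
        ext x; simp [Subtype.coe_lt_coe]
      rw [this]
      exact isOpen_Iio.preimage continuous_subtype_val
  · have hreal : (UniformSpace.toTopologicalSpace : TopologicalSpace ℝ) =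
        TopologicalSpace.generateFrom {s : Set ℝ | ∃ a, s = Set.Ioi a ∨ s = Set.Iio a} :=
      OrderTopology.topology_eq_generate_intervals
    show TopologicalSpace.generateFrom _ ≤ TopologicalSpace.induced Subtype.val _
    rw [hreal, induced_generateFrom_eq]
    refine le_generateFrom ?_
    rintro s ⟨u, ⟨a, rfl | rfl⟩, rfl⟩
    · -- preimage of Ioi a
      by_cases h : ∃ x : ↥T, (x : ℝ) ≤ a
      · obtain ⟨x₀, hx₀⟩ := h
        set A : Set ℝ := T ∩ Set.Iic a with hA
        have hAne : A.Nonempty := ⟨x₀, x₀.2, hx₀⟩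
        have hAcl : IsClosed A := hcl.inter isClosed_Iic
        have hAbdd : BddAbove A := ⟨a, fun y hy => hy.2⟩
        have hmem : sSup A ∈ A := hAcl.csSup_mem hAne hAbdd
        refine TopologicalSpace.GenerateOpen.basic _ ⟨⟨sSup A, hmem.1⟩, Or.inl ?_⟩
        ext x
        simp only [Set.mem_Ioi, Set.mem_preimage, Set.mem_Ioi, ← Subtype.coe_lt_coe]
        constructor
        · intro hx
          exact lt_of_le_of_lt hmem.2 hx
        · intro hx
          by_contra hxa
          push_neg at hxa
          exact absurd (le_csSup hAbdd ⟨x.2, hxa⟩) (not_le.2 hx)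

      · push_neg at h
        have : (Subtype.val ⁻¹' Set.Ioi a : Set ↥T) = Set.univ := by
          ext x; simpa using h x
        rw [this]
        exact TopologicalSpace.GenerateOpen.univ
    · -- preimage of Iio a
      by_cases h : ∃ x : ↥T, a ≤ (x : ℝ)
      · obtain ⟨x₀, hx₀⟩ := h
        set A : Set ℝ := T ∩ Set.Ici a with hA
        have hAne : A.Nonempty := ⟨x₀, x₀.2, hx₀⟩
        have hAcl : IsClosed A := hcl.inter isClosed_Ici
        have hAbdd : BddBelow A := ⟨a, fun y hy => hy.2⟩
        have hmem : sInf A ∈ A := hAcl.csInf_mem hAne hAbdd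
        refine TopologicalSpace.GenerateOpen.basic _ ⟨⟨sInf A, hmem.1⟩, Or.inr ?_⟩
        ext x
        simp only [Set.mem_Iio, Set.mem_preimage, Set.mem_Iio, ← Subtype.coe_lt_coe]
        constructor
        · intro hx
          exact lt_of_lt_of_le hx hmem.2
        · intro hx
          by_contra hxa
          push_neg at hxa
          exact absurd (csInf_le hAbdd ⟨x.2, hxa⟩) (not_le.2 hx)
      · push_neg at h
        have : (Subtype.val ⁻¹' Set.Iio a : Set ↥T) = Set.univ := by
          ext x; simpa using h x
        rw [this]
        exact TopologicalSpace.GenerateOpen.univ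

/-- There is a sequence whose range right-approximates every point of the time scale. -/
theorem tsos_exists_approx_seq (hcl : IsClosed T) (hbT : b ∈ T) (hsub : T ⊆ Set.Icc 0 b) :
    ∃ e : ℕ → ↥T, ∀ (s : ↥T) (ε : ℝ), 0 < ε → ∃ k, s ≤ e k ∧ (e k : ℝ) < (s : ℝ) + ε := by
  classical
  -- the countable set: right-isolated points plus points `sInf (T ∩ [q, ∞))` for rational `q`
  let Riso : Set ↥T := ⋃ q : ℚ, {s : ↥T | (s : ℝ) < q ∧ ∀ t : ↥T, s < t → (q : ℝ) ≤ t}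
  have hRiso : Riso.Countable := by
    refine Set.countable_iUnion fun q => Set.Subsingleton.countable ?_
    rintro s ⟨hs1, hs2⟩ s' ⟨hs1', hs2'⟩
    by_contra hne
    rcases lt_or_gt_of_ne hne with h | h
    · exact absurd (lt_of_le_of_lt (hs2 s' h) hs1') (lt_irrefl _)
    · exact absurd (lt_of_le_of_lt (hs2' s h) hs1) (lt_irrefl _)
  let g : ℚ → ↥T := fun q =>
    if h : (T ∩ Set.Ici (q : ℝ)).Nonempty then
      ⟨sInf (T ∩ Set.Ici (q : ℝ)),
        ((hcl.inter isClosed_Ici).csInf_mem h ⟨(q : ℝ), fun y hy => hy.2⟩).1⟩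
    else ⟨b, hbT⟩
  have hC : (Riso ∪ Set.range g).Countable := hRiso.union (Set.countable_range g)
  have hCne : (Riso ∪ Set.range g).Nonempty := ⟨g 0, Or.inr ⟨0, rfl⟩⟩
  obtain ⟨e, he⟩ := (Set.Countable.exists_eq_range hC hCne)
  refine ⟨e, fun s ε hε => ?_⟩
  have main : ∃ c ∈ Riso ∪ Set.range g, s ≤ c ∧ (c : ℝ) < (s : ℝ) + ε := by
    by_cases h : ∃ t : ↥T, s < t ∧ (t : ℝ) < (s : ℝ) + ε
    · obtain ⟨t, hst, htε⟩ := h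
      obtain ⟨q, hq1, hq2⟩ := exists_rat_btwn (Subtype.coe_lt_coe.2 hst)
      have hne : (T ∩ Set.Ici (q : ℝ)).Nonempty := ⟨t, t.2, le_of_lt hq2⟩
      have hval : g q = ⟨sInf (T ∩ Set.Ici (q : ℝ)), _⟩ := dif_pos hne
      have hmem := (hcl.inter isClosed_Ici).csInf_mem hne ⟨(q : ℝ), fun y hy => hy.2⟩
      have hgle : (g q : ℝ) ≤ (t : ℝ) := by
        rw [hval]
        exact csInf_le ⟨(q : ℝ), fun y hy => hy.2⟩ ⟨t.2, le_of_lt hq2⟩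
      have hgge : (q : ℝ) ≤ (g q : ℝ) := by rw [hval]; exact hmem.2
      refine ⟨g q, Or.inr ⟨q, rfl⟩, ?_, lt_of_le_of_lt hgle htε⟩
      exact Subtype.coe_le_coe.1 (le_of_lt (lt_of_lt_of_le hq1 hgge))
    · push_neg at h
      obtain ⟨q, hq1, hq2⟩ := exists_rat_btwn (lt_add_of_pos_right (s : ℝ) hε)
      refine ⟨s, Or.inl (Set.mem_iUnion.2 ⟨q, hq1, fun t hst => ?_⟩), le_refl s,
        lt_add_of_pos_right _ hε⟩
      by_contra hqt
      push_neg at hqt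
      exact absurd (h t hst) (not_le.2 (lt_trans hqt hq2))
  obtain ⟨c, hcC, hc1, hc2⟩ := main
  rw [he] at hcC
  obtain ⟨k, rfl⟩ := hcC
  exact ⟨k, hc1, hc2⟩

/-- Grid of candidate values at stage `n`. -/
noncomputable def tsosGrid (hbT : b ∈ T) (e : ℕ → ↥T) (n : ℕ) : Finset ↥T :=
  letI : DecidableEq ↥T := Classical.decEq _
  (Finset.range (n + 1)).image e ∪ {(⟨b, hbT⟩ : ↥T)}

theorem tsos_btop_mem_grid (hbT : b ∈ T) (e : ℕ → ↥T) (n : ℕ) :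
    (⟨b, hbT⟩ : ↥T) ∈ tsosGrid hbT e n := by
  classical
  simp [tsosGrid]

theorem tsos_e_mem_grid (hbT : b ∈ T) (e : ℕ → ↥T) {k n : ℕ} (hk : k ≤ n) :
    e k ∈ tsosGrid hbT e n := by
  classical
  simp only [tsosGrid, Finset.mem_union, Finset.mem_image]
  exact Or.inl ⟨k, Finset.mem_range.2 (Nat.lt_succ_of_le hk), rfl⟩

theorem tsos_le_btop (hbT : b ∈ T) (hsub : T ⊆ Set.Icc 0 b) (s : ↥T) :
    s ≤ (⟨b, hbT⟩ : ↥T) := Subtype.coe_le_coe.1 (hsub s.2).2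

/-- The filtered candidate set is nonempty. -/
theorem tsos_filter_ne (hbT : b ∈ T) (hsub : T ⊆ Set.Icc 0 b) (e : ℕ → ↥T) (n : ℕ) (s : ↥T) :
    ((tsosGrid hbT e n).filter (fun c => s ≤ c)).Nonempty :=
  ⟨⟨b, hbT⟩, Finset.mem_filter.2 ⟨tsos_btop_mem_grid hbT e n, tsos_le_btop hbT hsub s⟩⟩

/-- The `n`-th right approximation map. -/
noncomputable def tsosAppr (hbT : b ∈ T) (hsub : T ⊆ Set.Icc 0 b) (e : ℕ → ↥T) (n : ℕ)
    (s : ↥T) : ↥T :=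
  ((tsosGrid hbT e n).filter (fun c => s ≤ c)).min' (tsos_filter_ne hbT hsub e n s)

theorem tsos_appr_mem (hbT : b ∈ T) (hsub : T ⊆ Set.Icc 0 b) (e : ℕ → ↥T) (n : ℕ) (s : ↥T) :
    tsosAppr hbT hsub e n s ∈ tsosGrid hbT e n ∧ s ≤ tsosAppr hbT hsub e n s := by
  have := Finset.min'_mem _ (tsos_filter_ne hbT hsub e n s)
  rw [Finset.mem_filter] at this
  exact this

theorem tsos_appr_min (hbT : b ∈ T) (hsub : T ⊆ Set.Icc 0 b) (e : ℕ → ↥T) (n : ℕ) (s : ↥T)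
    {c : ↥T} (hc : c ∈ tsosGrid hbT e n) (hsc : s ≤ c) : tsosAppr hbT hsub e n s ≤ c :=
  Finset.min'_le _ _ (Finset.mem_filter.2 ⟨hc, hsc⟩)

theorem tsos_appr_mono (hbT : b ∈ T) (hsub : T ⊆ Set.Icc 0 b) (e : ℕ → ↥T) (n : ℕ) :
    Monotone (tsosAppr hbT hsub e n) := fun s s' hss' =>
  tsos_appr_min hbT hsub e n s (tsos_appr_mem hbT hsub e n s').1
    (le_trans hss' (tsos_appr_mem hbT hsub e n s').2)

theorem tsos_appr_tendsto (hbT : b ∈ T) (hsub : T ⊆ Set.Icc 0 b) (e : ℕ → ↥T)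
    (he : ∀ (s : ↥T) (ε : ℝ), 0 < ε → ∃ k, s ≤ e k ∧ (e k : ℝ) < (s : ℝ) + ε) (s : ↥T) :
    Tendsto (fun n => tsosAppr hbT hsub e n s) atTop (𝓝[Set.Ici s] s) := by
  rw [tendsto_nhdsWithin_iff]
  constructor
  · rw [tendsto_subtype_rng]
    rw [Metric.tendsto_atTop]
    intro ε hε
    obtain ⟨k, hk1, hk2⟩ := he s ε hε
    refine ⟨k, fun n hn => ?_⟩
    have h1 : tsosAppr hbT hsub e n s ≤ e k := tsos_appr_min hbT hsub e n s
      (tsos_e_mem_grid hbT e hn) hk1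
    have h2 : s ≤ tsosAppr hbT hsub e n s := (tsos_appr_mem hbT hsub e n s).2
    rw [Real.dist_eq, abs_lt]
    constructor
    · linarith [Subtype.coe_le_coe.2 h2]
    · have := Subtype.coe_le_coe.2 h1
      linarith
  · exact Filter.Eventually.of_forall fun n => (tsos_appr_mem hbT hsub e n s).2


theorem tsos_lowerSet (hcl : IsClosed T) (hsub : T ⊆ Set.Icc 0 b) {L : Set ↥T}
    (hL : ∀ ⦃a c : ↥T⦄, a ≤ c → c ∈ L → a ∈ L) :
    L = ∅ ∨ ∃ u : ↥T,
      (∀ c : ↥T, (∀ a ∈ L, a ≤ c) → u ≤ c) ∧ (L = Set.Iic u ∨ L = Set.Iio u) := by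
  by_cases hne : L.Nonempty
  · right
    have hbdd : BddAbove (Subtype.val '' L) := ⟨b, by rintro x ⟨a, _, rfl⟩; exact (hsub a.2).2⟩
    have hine : (Subtype.val '' L).Nonempty := hne.image _
    have huT : sSup (Subtype.val '' L) ∈ T := by
      have h1 : sSup (Subtype.val '' L) ∈ closure (Subtype.val '' L) :=
        csSup_mem_closure hine hbdd
      have h2 : closure (Subtype.val '' L) ⊆ T :=
        subset_trans (closure_mono (by rintro x ⟨a, _, rfl⟩; exact a.2))
          (by rw [hcl.closure_eq])
      exact h2 h1
    set u : ↥T := ⟨sSup (Subtype.val '' L), huT⟩ with hu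
    have hle_u : ∀ a ∈ L, a ≤ u := fun a ha =>
      Subtype.coe_le_coe.1 (le_csSup hbdd ⟨a, ha, rfl⟩)
    refine ⟨u, fun c hc => Subtype.coe_le_coe.1 (csSup_le hine ?_), ?_⟩
    · rintro x ⟨a, haL, rfl⟩
      exact Subtype.coe_le_coe.2 (hc a haL)
    by_cases huL : u ∈ L
    · left
      ext a
      exact ⟨fun ha => hle_u a ha, fun ha => hL ha huL⟩
    · right
      ext a
      constructor
      · intro ha
        exact lt_of_le_of_ne (hle_u a ha) (fun h => huL (h ▸ ha))
      · intro ha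
        obtain ⟨x, ⟨a', ha'L, rfl⟩, hax⟩ := exists_lt_of_lt_csSup hine ha
        exact hL (le_of_lt (Subtype.coe_lt_coe.1 hax)) ha'L
  · left
    exact Set.not_nonempty_iff_eq_empty.1 hne

theorem tsos_measurableSet_lower (hcl : IsClosed T) (hsub : T ⊆ Set.Icc 0 b) {L : Set ↥T}
    (hL : ∀ ⦃a c : ↥T⦄, a ≤ c → c ∈ L → a ∈ L) : MeasurableSet L := by
  haveI := tsos_orderTopology hcl hsub
  rcases tsos_lowerSet hcl hsub hL with rfl | ⟨u, -, rfl | rfl⟩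
  · exact MeasurableSet.empty
  · exact measurableSet_Iic
  · exact measurableSet_Iio

theorem tsos_measurableSet_fiber (hcl : IsClosed T) (hsub : T ⊆ Set.Icc 0 b)
    {f : ↥T → ↥T} (hmono : Monotone f) (d : ↥T) : MeasurableSet (f ⁻¹' {d}) := by
  have h1 : MeasurableSet (f ⁻¹' Set.Iic d) :=
    tsos_measurableSet_lower hcl hsub fun a c hac hc => le_trans (hmono hac) hc
  have h2 : MeasurableSet (f ⁻¹' Set.Iio d) :=
    tsos_measurableSet_lower hcl hsub fun a c hac hc => lt_of_le_of_lt (hmono hac) hc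
  have : f ⁻¹' {d} = f ⁻¹' Set.Iic d \ f ⁻¹' Set.Iio d := by
    ext x
    simp only [Set.mem_preimage, Set.mem_singleton_iff, Set.mem_diff, Set.mem_Iic, Set.mem_Iio,
      not_lt, le_antisymm_iff, and_comm]
  rw [this]
  exact h1.diff h2

theorem tsos_isStoppingTime_comp (hcl : IsClosed T) (hsub : T ⊆ Set.Icc 0 b)
    {Ω : Type*} {mΩ : MeasurableSpace Ω} {ℱ : Filtration ↥T mΩ} {S : Ω → ↥T}
    (hS : IsStoppingTime ℱ (fun ω => (S ω : WithTop ↥T))) {f : ↥T → ↥T} (hmono : Monotone f)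
    (hid : ∀ s, s ≤ f s) :
    IsStoppingTime ℱ (fun ω => ((f (S ω) : ↥T) : WithTop ↥T)) := by
  haveI := tsos_orderTopology hcl hsub
  intro t
  show MeasurableSet[ℱ t] {ω | ((f (S ω) : ↥T) : WithTop ↥T) ≤ (t : WithTop ↥T)}
  have hset : {ω | ((f (S ω) : ↥T) : WithTop ↥T) ≤ (t : WithTop ↥T)} = S ⁻¹' {s | f s ≤ t} := by
    ext ω; simp
  have hL : ∀ ⦃a c : ↥T⦄, a ≤ c → c ∈ {s | f s ≤ t} → a ∈ {s | f s ≤ t} :=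
    fun a c hac hc => le_trans (hmono hac) hc
  rcases tsos_lowerSet hcl hsub hL with hemp | ⟨u, hub, hcase | hcase⟩
  · rw [hset, hemp]
    exact @MeasurableSet.empty _ (ℱ t)
  all_goals
    have hut : u ≤ t := hub t fun a ha => le_trans (hid a) ha
  · rw [hset, hcase]
    exact ℱ.mono hut _ (by convert hS.measurableSet_le u using 1; ext ω; simp)
  · rw [hset, hcase]
    exact ℱ.mono hut _ (by convert hS.measurableSet_lt u using 1; ext ω; simp)

/-- Coercion commutes with `min`. -/
theorem tsos_coe_min (a c : ↥T) : ((min a c : ↥T) : ℝ) = min (a : ℝ) (c : ℝ) :=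
  (Monotone.map_min (fun _ _ h => Subtype.coe_le_coe.2 h))

/-- A right-continuous adapted process on a time scale is progressively measurable. -/
theorem tsos_progMeasurable (hcl : IsClosed T) (hbT : b ∈ T) (hsub : T ⊆ Set.Icc 0 b)
    {Ω : Type*} {mΩ : MeasurableSpace Ω} {ℱ : Filtration ↥T mΩ} {X : ↥T → Ω → ℝ}
    (hadp : StronglyAdapted ℱ X)
    (hrc : ∀ ω, ∀ t : ↥T, ContinuousWithinAt (fun s : ↥T => X s ω) (Set.Ici t) t) :
    IsStronglyProgressive ℱ X := by
  classical
  obtain ⟨e, he⟩ := tsos_exists_approx_seq hcl hbT hsub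
  intro i
  -- capped approximation maps
  set g : ℕ → ↥T → ↥T := fun n s => min (tsosAppr hbT hsub e n s) i with hg
  have hg_mono : ∀ n, Monotone (g n) := fun n a c hac =>
    min_le_min (tsos_appr_mono hbT hsub e n hac) le_rfl
  have hg_le : ∀ n s, g n s ≤ i := fun n s => min_le_right _ _
  have hg_ge : ∀ n (s : ↥T), s ≤ i → s ≤ g n s := fun n s hs =>
    le_min (tsos_appr_mem hbT hsub e n s).2 hs
  have hg_tendsto : ∀ s : ↥T, s ≤ i → Tendsto (fun n => g n s) atTop (𝓝[Set.Ici s] s) := by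
    intro s hs
    rw [tendsto_nhdsWithin_iff]
    refine ⟨?_, Filter.Eventually.of_forall fun n => hg_ge n s hs⟩
    rw [tendsto_subtype_rng]
    have h1 : Tendsto (fun n => (tsosAppr hbT hsub e n s : ℝ)) atTop (𝓝 (s : ℝ)) := by
      have := (tsos_appr_tendsto hbT hsub e he s).mono_right nhdsWithin_le_nhds
      rw [tendsto_subtype_rng] at this
      exact this
    have h2 : Tendsto (fun n => min (tsosAppr hbT hsub e n s : ℝ) (i : ℝ)) atTop
        (𝓝 (min (s : ℝ) (i : ℝ))) := h1.min tendsto_const_nhds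
    rw [min_eq_left (Subtype.coe_le_coe.2 hs)] at h2
    simpa only [hg, tsos_coe_min] using h2
  -- the measurable space on the product
  set mp : MeasurableSpace (Set.Iic i × Ω) :=
    (Subtype.instMeasurableSpace : MeasurableSpace (Set.Iic i)).prod (ℱ i) with hmp
  -- finite grid at stage n
  set D : ℕ → Finset ↥T := fun n => (tsosGrid hbT e n).image (fun c => min c i) with hD
  have hD_le : ∀ n, ∀ d ∈ D n, d ≤ i := by
    intro n d hd
    simp only [hD, Finset.mem_image] at hd
    obtain ⟨c, -, rfl⟩ := hd
    exact min_le_right _ _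
  have hg_memD : ∀ n (s : ↥T), g n s ∈ D n := fun n s =>
    Finset.mem_image_of_mem _ (tsos_appr_mem hbT hsub e n s).1
  -- approximating functions on the product
  set F : ℕ → Set.Iic i × Ω → ℝ := fun n p => X (g n (p.1 : ↥T)) p.2 with hF
  have hF_meas : ∀ n, Measurable[mp] (F n) := by
    intro n
    have hrepr : F n = fun p => ∑ d ∈ D n,
        Set.indicator {p : Set.Iic i × Ω | g n (p.1 : ↥T) = d} (fun p => X d p.2) p := by
      funext p
      rw [Finset.sum_eq_single_of_mem (g n (p.1 : ↥T)) (hg_memD n _)]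
      · rw [Set.indicator_of_mem (by simp : p ∈ {p : Set.Iic i × Ω | g n (p.1 : ↥T) = _})]
      · intro d _ hd
        rw [Set.indicator_of_notMem]
        simp only [Set.mem_setOf_eq]
        exact fun h => absurd h.symm hd
    rw [hrepr]
    refine Finset.measurable_sum _ fun d hd => ?_
    refine Measurable.indicator ?_ ?_
    · have hXd : StronglyMeasurable[ℱ i] (X d) := (hadp d).mono (ℱ.mono (hD_le n d hd))
      exact hXd.measurable.comp (@measurable_snd _ _ _ (ℱ i))
    · have hfib : MeasurableSet ((g n) ⁻¹' {d}) :=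
        tsos_measurableSet_fiber hcl hsub (hg_mono n) d
      have : {p : Set.Iic i × Ω | g n (p.1 : ↥T) = d} =
          Prod.fst ⁻¹' (Subtype.val ⁻¹' ((g n) ⁻¹' {d})) := rfl
      rw [this]
      exact (@measurable_fst _ _ _ (ℱ i)).comp measurable_id
        (measurable_subtype_coe hfib)
  have hF_tendsto : ∀ p : Set.Iic i × Ω,
      Tendsto (fun n => F n p) atTop (𝓝 (X (p.1 : ↥T) p.2)) := by
    intro p
    exact (hrc p.2 (p.1 : ↥T)).tendsto.comp (hg_tendsto (p.1 : ↥T) p.1.2)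
  have : Measurable[mp] fun p : Set.Iic i × Ω => X (p.1 : ↥T) p.2 := by
    refine measurable_of_tendsto_metrizable hF_meas ?_
    rw [tendsto_pi_nhds]
    exact hF_tendsto
  exact this.stronglyMeasurable

/-- Key lemma: the stopped value of the martingale at any stopping time is `E[X_b | ℱ_S]`. -/
theorem tsos_key (hcl : IsClosed T) (hbT : b ∈ T) (hsub : T ⊆ Set.Icc 0 b)
    {Ω : Type*} {mΩ : MeasurableSpace Ω} (P : Measure Ω) [IsProbabilityMeasure P]
    (ℱ : Filtration ↥T mΩ) (X : ↥T → Ω → ℝ) (hX : Martingale X ℱ P)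
    (hrc : ∀ ω, ∀ t : ↥T, ContinuousWithinAt (fun s : ↥T => X s ω) (Set.Ici t) t)
    [Nonempty ↥T] {S : Ω → ↥T} (hS : IsStoppingTime ℱ (fun ω => (S ω : WithTop ↥T))) :
    Integrable (stoppedValue X (fun ω => (S ω : WithTop ↥T))) P ∧
      stoppedValue X (fun ω => (S ω : WithTop ↥T)) =ᵐ[P] P[X ⟨b, hbT⟩|hS.measurableSpace] := by
  haveI := tsos_orderTopology hcl hsub
  set btop : ↥T := ⟨b, hbT⟩ with hbtop
  have hSle : ∀ ω, (S ω : WithTop ↥T) ≤ btop := fun ω => WithTop.coe_le_coe.2 (tsos_le_btop hbT hsub _)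
  have hm : hS.measurableSpace ≤ mΩ := hS.measurableSpace_le_of_le hSle
  haveI : SigmaFinite (P.trim hm) := inferInstance
  obtain ⟨e, he⟩ := tsos_exists_approx_seq hcl hbT hsub
  set Sn : ℕ → Ω → ↥T := fun n ω => tsosAppr hbT hsub e n (S ω) with hSndef
  have hSn : ∀ n, IsStoppingTime ℱ (fun ω => (Sn n ω : WithTop ↥T)) := fun n =>
    tsos_isStoppingTime_comp hcl hsub hS (tsos_appr_mono hbT hsub e n)
      (fun s => (tsos_appr_mem hbT hsub e n s).2)
  have hS_le_Sn : ∀ n ω, S ω ≤ Sn n ω := fun n ω => (tsos_appr_mem hbT hsub e n (S ω)).2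
  have hSnle : ∀ n ω, (Sn n ω : WithTop ↥T) ≤ btop := fun n ω =>
    WithTop.coe_le_coe.2 (tsos_le_btop hbT hsub _)
  have hmn : ∀ n, (hSn n).measurableSpace ≤ mΩ := fun n =>
    (hSn n).measurableSpace_le_of_le (hSnle n)
  haveI : ∀ n, SigmaFinite (P.trim ((hSn n).measurableSpace_le_of_le (hSnle n))) :=
    fun n => inferInstance
  have hcount : ∀ n, (Set.range (fun ω => (Sn n ω : WithTop ↥T))).Countable := by
    intro n
    refine Set.Countable.mono ?_
      ((tsosGrid hbT e n).countable_toSet.image ((↑) : ↥T → WithTop ↥T))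
    rintro x ⟨ω, rfl⟩
    exact ⟨_, (tsos_appr_mem hbT hsub e n (S ω)).1, rfl⟩
  have heqn : ∀ n, stoppedValue X (fun ω => (Sn n ω : WithTop ↥T)) =ᵐ[P] P[X btop|(hSn n).measurableSpace] := fun n =>
    hX.stoppedValue_ae_eq_condExp_of_le_const_of_countable_range (hSn n) (hSnle n) (hcount n)
  have hXb_int : Integrable (X btop) P := hX.integrable btop
  have hintn : ∀ n, Integrable (stoppedValue X (fun ω => (Sn n ω : WithTop ↥T))) P := fun n =>
    integrable_condExp.congr (heqn n).symm
  have hui : UnifIntegrable (fun n => stoppedValue X (fun ω => (Sn n ω : WithTop ↥T))) 1 P := by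
    have h1 : UniformIntegrable (fun n => P[X btop|(hSn n).measurableSpace]) 1 P :=
      hXb_int.uniformIntegrable_condExp hmn
    exact (h1.ae_eq fun n => (heqn n).symm).2.1
  have htd : ∀ ω, Tendsto (fun n => stoppedValue X (fun ω => (Sn n ω : WithTop ↥T)) ω) atTop
      (𝓝 (stoppedValue X (fun ω => (S ω : WithTop ↥T)) ω)) := fun ω =>
    (hrc ω (S ω)).tendsto.comp (tsos_appr_tendsto hbT hsub e he (S ω))
  have hprog : IsStronglyProgressive ℱ X := tsos_progMeasurable hcl hbT hsub hX.stronglyAdapted hrc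
  have hsv_meas : Measurable[hS.measurableSpace] (stoppedValue X (fun ω => (S ω : WithTop ↥T))) :=
    measurable_stoppedValue hprog hS
  have hsv_sm : StronglyMeasurable[hS.measurableSpace] (stoppedValue X (fun ω => (S ω : WithTop ↥T))) := by
    exact hsv_meas.stronglyMeasurable
  have hsv_aesm : AEStronglyMeasurable (stoppedValue X (fun ω => (S ω : WithTop ↥T))) P :=
    (hsv_sm.mono hm).aestronglyMeasurable
  have hmemp : MemLp (stoppedValue X (fun ω => (S ω : WithTop ↥T))) 1 P := by
    refine ⟨hsv_aesm, ?_⟩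
    rw [eLpNorm_one_eq_lintegral_enorm]
    have hbound : ∀ n, ∫⁻ ω, ‖stoppedValue X (fun ω => (Sn n ω : WithTop ↥T)) ω‖ₑ ∂P ≤
        eLpNorm (X btop) 1 P := by
      intro n
      rw [← eLpNorm_one_eq_lintegral_enorm]
      calc eLpNorm (stoppedValue X (fun ω => (Sn n ω : WithTop ↥T))) 1 P
          = eLpNorm (P[X btop|(hSn n).measurableSpace]) 1 P := eLpNorm_congr_ae (heqn n)
        _ ≤ eLpNorm (X btop) 1 P := eLpNorm_one_condExp_le_eLpNorm _
    have hlim : ∫⁻ ω, (‖stoppedValue X (fun ω => (S ω : WithTop ↥T)) ω‖₊ : ENNReal) ∂P ≤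
        Filter.liminf (fun n => ∫⁻ ω, (‖stoppedValue X (fun ω => (Sn n ω : WithTop ↥T)) ω‖₊ : ENNReal) ∂P) atTop := by
      have hten : ∀ ω, Tendsto (fun n => (‖stoppedValue X (fun ω => (Sn n ω : WithTop ↥T)) ω‖₊ : ENNReal)) atTop
          (𝓝 (‖stoppedValue X (fun ω => (S ω : WithTop ↥T)) ω‖₊ : ENNReal)) := fun ω =>
        ENNReal.tendsto_coe.2 ((htd ω).nnnorm)
      calc ∫⁻ ω, (‖stoppedValue X (fun ω => (S ω : WithTop ↥T)) ω‖₊ : ENNReal) ∂P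
          = ∫⁻ ω, Filter.liminf (fun n => (‖stoppedValue X (fun ω => (Sn n ω : WithTop ↥T)) ω‖₊ : ENNReal)) atTop ∂P :=
            lintegral_congr fun ω => ((hten ω).liminf_eq).symm
        _ ≤ _ := lintegral_liminf_le' fun n =>
            (hintn n).aestronglyMeasurable.aemeasurable.nnnorm.coe_nnreal_ennreal
    refine lt_of_le_of_lt (le_trans hlim ?_) (memLp_one_iff_integrable.2 hXb_int).2
    exact le_trans Filter.liminf_le_limsup (Filter.limsup_le_of_le (by isBoundedDefault)
      (Filter.Eventually.of_forall hbound))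
  have hint : Integrable (stoppedValue X (fun ω => (S ω : WithTop ↥T))) P := memLp_one_iff_integrable.1 hmemp
  have hL1 : Tendsto (fun n => eLpNorm (stoppedValue X (fun ω => (Sn n ω : WithTop ↥T)) - stoppedValue X (fun ω => (S ω : WithTop ↥T))) 1 P)
      atTop (𝓝 0) :=
    tendsto_Lp_finite_of_tendsto_ae le_rfl ENNReal.one_ne_top
      (fun n => (hintn n).aestronglyMeasurable) hmemp hui (Filter.Eventually.of_forall htd)
  have hset : ∀ A, MeasurableSet[hS.measurableSpace] A →
      ∫ ω in A, stoppedValue X (fun ω => (S ω : WithTop ↥T)) ω ∂P = ∫ ω in A, X btop ω ∂P := by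
    intro A hA
    have hAn : ∀ n, MeasurableSet[(hSn n).measurableSpace] A := fun n =>
      hS.measurableSpace_mono (hSn n) (fun ω => WithTop.coe_le_coe.2 (hS_le_Sn n ω)) _ hA
    have h1 : Tendsto (fun n => ∫ ω in A, stoppedValue X (fun ω => (Sn n ω : WithTop ↥T)) ω ∂P) atTop
        (𝓝 (∫ ω in A, stoppedValue X (fun ω => (S ω : WithTop ↥T)) ω ∂P)) :=
      tendsto_setIntegral_of_L1' _ hint.aestronglyMeasurable (Filter.Eventually.of_forall hintn) hL1 A
    have h2 : ∀ n, ∫ ω in A, stoppedValue X (fun ω => (Sn n ω : WithTop ↥T)) ω ∂P = ∫ ω in A, X btop ω ∂P := by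
      intro n
      rw [integral_congr_ae (ae_restrict_of_ae (heqn n))]
      exact setIntegral_condExp (hmn n) hXb_int (hAn n)
    simp_rw [h2] at h1
    exact tendsto_nhds_unique h1 tendsto_const_nhds
  refine ⟨hint, ?_⟩
  have hsf : SigmaFinite (P.trim hm) :=
    @IsFiniteMeasure.toSigmaFinite Ω hS.measurableSpace (P.trim hm) (isFiniteMeasure_trim hm)
  exact ae_eq_condExp_of_forall_setIntegral_eq (m := hS.measurableSpace) (μ := P) hm
    (f := X btop) (g := stoppedValue X (fun ω => (S ω : WithTop ↥T))) hXb_int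
    (fun A hA _ => hint.integrableOn) (fun A hA _ => hset A hA)
    hsv_sm.aestronglyMeasurable


end TSOS


theorem stmt_4 (T : Set ℝ) (hcl : IsClosed T) (b : ℝ) (h0T : (0 : ℝ) ∈ T) (hbT : b ∈ T)
    (hsub : T ⊆ Set.Icc 0 b)
    {Ω : Type*} {mΩ : MeasurableSpace Ω} (P : Measure Ω) [IsProbabilityMeasure P]
    (ℱ : Filtration ↥T mΩ) (X : ↥T → Ω → ℝ)
    (hX : Martingale X ℱ P)
    (hrc : ∀ ω, ∀ t : ↥T, ContinuousWithinAt (fun s : ↥T => X s ω) (Set.Ici t) t)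
    (S₁ S₂ : Ω → ↥T) (hS₁ : IsStoppingTime ℱ (fun ω => (S₁ ω : WithTop ↥T)))
    (hS₂ : IsStoppingTime ℱ (fun ω => (S₂ ω : WithTop ↥T)))
    (hle : ∀ ω, S₁ ω ≤ S₂ ω) :
    Integrable (fun ω => X (S₁ ω) ω) P ∧ Integrable (fun ω => X (S₂ ω) ω) P ∧
      P[fun ω => X (S₂ ω) ω|hS₁.measurableSpace] =ᵐ[P] fun ω => X (S₁ ω) ω := by
  haveI : Nonempty ↥T := ⟨⟨b, hbT⟩⟩
  have key1 := tsos_key hcl hbT hsub P ℱ X hX hrc hS₁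
  have key2 := tsos_key hcl hbT hsub P ℱ X hX hrc hS₂
  refine ⟨key1.1, key2.1, ?_⟩
  have hm12 : hS₁.measurableSpace ≤ hS₂.measurableSpace := hS₁.measurableSpace_mono hS₂ fun ω => WithTop.coe_le_coe.2 (hle ω)
  have hm2 : hS₂.measurableSpace ≤ mΩ :=
    hS₂.measurableSpace_le_of_le fun ω => WithTop.coe_le_coe.2 (tsos_le_btop hbT hsub _)
  haveI : SigmaFinite (P.trim (hm12.trans hm2)) := inferInstance
  show P[stoppedValue X (fun ω => (S₂ ω : WithTop ↥T))|hS₁.measurableSpace] =ᵐ[P] stoppedValue X (fun ω => (S₁ ω : WithTop ↥T))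
  calc P[stoppedValue X (fun ω => (S₂ ω : WithTop ↥T))|hS₁.measurableSpace]
      =ᵐ[P] P[P[X ⟨b, hbT⟩|hS₂.measurableSpace]|hS₁.measurableSpace] := condExp_congr_ae key2.2
    _ =ᵐ[P] P[X ⟨b, hbT⟩|hS₁.measurableSpace] := condExp_condExp_of_le hm12 hm2
    _ =ᵐ[P] stoppedValue X (fun ω => (S₁ ω : WithTop ↥T)) := key1.2.symm
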